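/- For any odd positive integer n and any natural number λ, the number of orbits of the rotation group Z/nZ acting on the set of proper λ-colorings of the cycle Γ_n equals (1/n) ∑_{d | n} φ(n/d) (λ−1)^d − λ + 1. -/
import Mathlib

open Finset

namespace OrbitalAux8

lemma card_ne_fiber (l : ℕ) (a : Fin l) : Fintype.card {c : Fin l // c ≠ a} = l - 1 := by
  classical
  have := Fintype.card_subtype_compl (fun c : Fin l => c = a)
  simpa [Fintype.card_subtype_eq] using this

lemma path_card (l k : ℕ) :
    Fintype.card {f : Fin (k+1) → Fin l // ∀ i : Fin k, f i.castSucc ≠ f i.succ}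
      = l * (l-1)^k := by
  induction k with
  | zero =>
    have e : {f : Fin 1 → Fin l // ∀ i : Fin 0, f i.castSucc ≠ f i.succ} ≃ (Fin 1 → Fin l) :=
      Equiv.subtypeUnivEquiv (fun f i => i.elim0)
    rw [Fintype.card_congr e]
    simp
  | succ k ih =>
    classical
    set T := {f : Fin (k+1) → Fin l // ∀ i : Fin k, f i.castSucc ≠ f i.succ} with hT
    have Φbij : Function.Bijective
        (fun pc : Σ p : T, {c : Fin l // c ≠ p.1 (Fin.last k)} =>
          (⟨Fin.snoc pc.1.1 pc.2.1, by
            intro i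
            rcases Fin.eq_castSucc_or_eq_last i with ⟨j, rfl⟩ | rfl
            · rw [Fin.succ_castSucc, Fin.snoc_castSucc, Fin.snoc_castSucc]
              exact pc.1.2 j
            · rw [Fin.succ_last, Fin.snoc_castSucc, Fin.snoc_last]
              exact Ne.symm pc.2.2⟩ :
            {f : Fin (k+2) → Fin l // ∀ i : Fin (k+1), f i.castSucc ≠ f i.succ})) := by
      constructor
      · rintro ⟨⟨p, hp⟩, ⟨c, hc⟩⟩ ⟨⟨p', hp'⟩, ⟨c', hc'⟩⟩ h
        have h' := congrArg Subtype.val h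
        have hpp : p = p' := by
          funext i
          have := congrFun h' i.castSucc
          simpa [Fin.snoc_castSucc] using this
        subst hpp
        have hcc : c = c' := by
          have := congrFun h' (Fin.last (k+1))
          simpa [Fin.snoc_last] using this
        subst hcc
        rfl
      · rintro ⟨f, hf⟩
        refine ⟨⟨⟨fun i => f i.castSucc, fun i => ?_⟩, ⟨f (Fin.last (k+1)), ?_⟩⟩, ?_⟩
        · have := hf i.castSucc
          rwa [Fin.succ_castSucc] at this
        · have := hf (Fin.last k)
          rw [Fin.succ_last] at this
          exact Ne.symm this
        · apply Subtype.ext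
          funext i
          rcases Fin.eq_castSucc_or_eq_last i with ⟨j, rfl⟩ | rfl
          · simp [Fin.snoc_castSucc]
          · simp [Fin.snoc_last]
    have := Fintype.card_congr (Equiv.ofBijective _ Φbij)
    rw [Fintype.card_sigma] at this
    simp only [card_ne_fiber] at this
    rw [Finset.sum_const, Finset.card_univ, smul_eq_mul] at this
    rw [← this, ih, pow_succ, mul_assoc]

/-- cyclic condition in terms of path condition -/
lemma cyc_iff {l m : ℕ} (f : Fin (m+1) → Fin l) :
    (∀ x, f x ≠ f (x+1)) ↔
      ((∀ i : Fin m, f i.castSucc ≠ f i.succ) ∧ f (Fin.last m) ≠ f 0) := by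
  constructor
  · intro h
    refine ⟨fun i => ?_, ?_⟩
    · have := h i.castSucc; rwa [Fin.coeSucc_eq_succ] at this
    · have := h (Fin.last m); rwa [Fin.last_add_one] at this
  · rintro ⟨h1, h2⟩ x
    rcases Fin.eq_castSucc_or_eq_last x with ⟨i, rfl⟩ | rfl
    · rw [Fin.coeSucc_eq_succ]; exact h1 i
    · rw [Fin.last_add_one]; exact h2

lemma cyc_one (l : ℕ) :
    Nat.card {f : Fin 1 → Fin l // ∀ x : Fin 1, f x ≠ f (x+1)} = 0 := by
  have : IsEmpty {f : Fin 1 → Fin l // ∀ x : Fin 1, f x ≠ f (x+1)} :=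
    ⟨fun f => f.2 0 (congrArg f.1 (Subsingleton.elim _ _))⟩
  exact Nat.card_of_isEmpty

lemma cyc_rec (l j : ℕ) :
    Nat.card {f : Fin (j+2) → Fin l // ∀ x, f x ≠ f (x+1)}
      + Nat.card {f : Fin (j+1) → Fin l // ∀ x, f x ≠ f (x+1)}
      = l * (l-1)^(j+1) := by
  classical
  have E1 : {f : Fin (j+2) → Fin l // ∀ x, f x ≠ f (x+1)}
      ≃ {f : Fin (j+2) → Fin l //
          (∀ i : Fin (j+1), f i.castSucc ≠ f i.succ) ∧ ¬ (f (Fin.last (j+1)) = f 0)} :=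
    Equiv.subtypeEquivRight (fun f => cyc_iff f)
  have E2bij : Function.Bijective
      (fun g : {g : Fin (j+1) → Fin l // ∀ x, g x ≠ g (x+1)} =>
        (⟨Fin.snoc g.1 (g.1 0), by
          obtain ⟨h1, h2⟩ := (cyc_iff g.1).1 g.2
          constructor
          · intro i
            rcases Fin.eq_castSucc_or_eq_last i with ⟨x, rfl⟩ | rfl
            · rw [Fin.succ_castSucc, Fin.snoc_castSucc, Fin.snoc_castSucc]
              exact h1 x
            · rw [Fin.succ_last, Fin.snoc_castSucc, Fin.snoc_last]
              exact h2
          · rw [Fin.snoc_last,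
              show (0 : Fin (j+2)) = Fin.castSucc 0 from (Fin.castSucc_zero).symm,
              Fin.snoc_castSucc]⟩ :
        {f : Fin (j+2) → Fin l //
          (∀ i : Fin (j+1), f i.castSucc ≠ f i.succ) ∧ f (Fin.last (j+1)) = f 0})) := by
    constructor
    · rintro ⟨g, hg⟩ ⟨g', hg'⟩ h
      have h' := congrArg Subtype.val h
      apply Subtype.ext
      funext i
      have := congrFun h' i.castSucc
      simpa [Fin.snoc_castSucc] using this
    · rintro ⟨f, hf, hlast⟩
      refine ⟨⟨fun x => f x.castSucc, ?_⟩, ?_⟩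
      · rw [cyc_iff]
        refine ⟨fun i => ?_, ?_⟩
        · have := hf i.castSucc
          rwa [Fin.succ_castSucc] at this
        · have := hf (Fin.last j)
          rw [Fin.succ_last, hlast] at this
          rwa [show (0 : Fin (j+2)) = Fin.castSucc 0 from (Fin.castSucc_zero).symm] at this
      · apply Subtype.ext
        funext i
        rcases Fin.eq_castSucc_or_eq_last i with ⟨x, rfl⟩ | rfl
        · simp [Fin.snoc_castSucc]
        · simp only [Fin.snoc_last, Fin.castSucc_zero]
          exact hlast.symm
  have hsplit : Nat.card {f : Fin (j+2) → Fin l //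
        (∀ i : Fin (j+1), f i.castSucc ≠ f i.succ) ∧ f (Fin.last (j+1)) = f 0}
      + Nat.card {f : Fin (j+2) → Fin l //
        (∀ i : Fin (j+1), f i.castSucc ≠ f i.succ) ∧ ¬ (f (Fin.last (j+1)) = f 0)}
      = Nat.card {f : Fin (j+2) → Fin l //
        ∀ i : Fin (j+1), f i.castSucc ≠ f i.succ} := by
    rw [← Nat.card_sum]
    apply Nat.card_congr
    exact (Equiv.sumCongr (Equiv.subtypeSubtypeEquivSubtypeInter _ _).symm
      (Equiv.subtypeSubtypeEquivSubtypeInter _ _).symm).trans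
      (Equiv.sumCompl (fun x : {f : Fin (j+2) → Fin l //
        ∀ i : Fin (j+1), f i.castSucc ≠ f i.succ} => x.1 (Fin.last (j+1)) = x.1 0))
  rw [Nat.card_congr E1, Nat.card_congr (Equiv.ofBijective _ E2bij)]
  rw [Nat.add_comm, hsplit, Nat.card_eq_fintype_card, path_card]

lemma cast_helper (l k : ℕ) : ((l * (l-1)^k : ℕ) : ℤ) = (l : ℤ) * ((l : ℤ) - 1)^k := by
  cases l with
  | zero => simp
  | succ m => push_cast [Nat.succ_sub_one]; ring

lemma cyc_card (l : ℕ) : ∀ j : ℕ,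
    (Nat.card {f : Fin (j+1) → Fin l // ∀ x, f x ≠ f (x+1)} : ℤ)
      = ((l : ℤ) - 1)^(j+1) + (-1)^(j+1) * ((l : ℤ) - 1) := by
  intro j
  induction j with
  | zero =>
    rw [cyc_one]
    push_cast
    ring
  | succ j ih =>
    have hrec := cyc_rec l j
    have hcast := congrArg (Nat.cast (R := ℤ)) hrec
    rw [Nat.cast_add, cast_helper] at hcast
    have : (Nat.card {f : Fin (j+2) → Fin l // ∀ x, f x ≠ f (x+1)} : ℤ)
        = (l : ℤ) * ((l : ℤ) - 1)^(j+1)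
          - (((l : ℤ) - 1)^(j+1) + (-1)^(j+1) * ((l : ℤ) - 1)) := by
      rw [← ih]; linarith
    rw [this]; ring


/-! ### Fixed colorings of a rotation -/

lemma constant_of_fixed {n l : ℕ} [NeZero n] (m : ZMod n) {f : ZMod n → Fin l}
    (hf : ∀ v, f (v + m) = f v) (v w : ZMod n)
    (h : ZMod.castHom (Nat.gcd_dvd_right m.val n) (ZMod (Nat.gcd m.val n)) v
       = ZMod.castHom (Nat.gcd_dvd_right m.val n) (ZMod (Nat.gcd m.val n)) w) :
    f v = f w := by
  set d := Nat.gcd m.val n with hd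
  have hmul : ∀ (k : ℕ) (v : ZMod n), f (v + (k : ZMod n) * m) = f v := by
    intro k
    induction k with
    | zero => intro v; simp
    | succ k ih =>
      intro v
      have hrw : v + ((k+1 : ℕ) : ZMod n) * m = (v + m) + (k : ZMod n) * m := by
        push_cast; ring
      rw [hrw, ih, hf]
  have hz : ∀ (z v : ZMod n), f (v + z * m) = f v := by
    intro z v
    have : ((z.val : ℕ) : ZMod n) = z := ZMod.natCast_rightInverse z
    rw [← this]
    exact hmul z.val v
  set a : ZMod n := ((Nat.gcdA m.val n : ℤ) : ZMod n) with ha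
  have hbez : (d : ZMod n) = m * a := by
    have hb := Nat.gcd_eq_gcd_ab m.val n
    have h2 : ((Nat.gcd m.val n : ℤ) : ZMod n)
        = (((m.val : ℤ) * Nat.gcdA m.val n + (n : ℤ) * Nat.gcdB m.val n : ℤ) : ZMod n) := by
      rw [← hb]
    push_cast at h2
    rw [ZMod.natCast_self, zero_mul, add_zero] at h2
    rw [← hd] at h2
    rw [h2]
    have : ((m.val : ℕ) : ZMod n) = m := ZMod.natCast_rightInverse m
    rw [this]
  have hu : (ZMod.castHom (Nat.gcd_dvd_right m.val n) (ZMod d)) (w - v) = 0 := by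
    rw [map_sub, h, sub_self]
  have hval : d ∣ (w - v).val := by
    have h1 : (((w - v).val : ℕ) : ZMod d) = 0 := by
      rw [ZMod.natCast_val, ← ZMod.castHom_apply (h := Nat.gcd_dvd_right m.val n), hu]
    exact (ZMod.natCast_eq_zero_iff _ _).1 h1
  obtain ⟨c, hc⟩ := hval
  have h1 : w - v = ((d * c : ℕ) : ZMod n) := by
    rw [← hc]
    exact (ZMod.natCast_rightInverse (w - v)).symm
  push_cast at h1
  rw [hbez] at h1
  have hw : w = v + (a * ((c : ℕ) : ZMod n)) * m := by
    have : w - v = m * a * ((c : ℕ) : ZMod n) := h1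
    linear_combination this
  rw [hw]
  exact (hz _ v).symm

lemma fixed_card (n l : ℕ) [NeZero n] (m : ZMod n) :
    Nat.card {f : ZMod n → Fin l // (∀ x, f x ≠ f (x+1)) ∧ ∀ v, f (v + m) = f v}
      = Nat.card {F : ZMod (Nat.gcd m.val n) → Fin l // ∀ y, F y ≠ F (y+1)} := by
  set d := Nat.gcd m.val n with hd
  have hdvd : d ∣ n := Nat.gcd_dvd_right _ _
  haveI : NeZero d := ⟨fun hz => NeZero.ne n (Nat.gcd_eq_zero_iff.1 hz).2⟩
  symm
  apply Nat.card_congr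
  have hm0 : ZMod.castHom hdvd (ZMod d) m = 0 := by
    rw [ZMod.castHom_apply, ← ZMod.natCast_val]
    exact (ZMod.natCast_eq_zero_iff _ _).2 (Nat.gcd_dvd_left _ _)
  have hyval : ∀ y : ZMod d, ZMod.castHom hdvd (ZMod d) ((y.val : ℕ) : ZMod n) = y := by
    intro y
    rw [map_natCast]
    exact ZMod.natCast_rightInverse y
  refine Equiv.ofBijective
    (fun F : {F : ZMod d → Fin l // ∀ y, F y ≠ F (y+1)} =>
      (⟨fun v => F.1 (ZMod.castHom hdvd (ZMod d) v), ?_, ?_⟩ :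
        {f : ZMod n → Fin l // (∀ x, f x ≠ f (x+1)) ∧ ∀ v, f (v + m) = f v})) ?_
  · intro x
    show F.1 (ZMod.castHom hdvd (ZMod d) x) ≠ F.1 (ZMod.castHom hdvd (ZMod d) (x+1))
    rw [map_add, map_one]
    exact F.2 _
  · intro v
    show F.1 (ZMod.castHom hdvd (ZMod d) (v + m)) = F.1 (ZMod.castHom hdvd (ZMod d) v)
    rw [map_add, hm0, add_zero]
  · constructor
    · rintro ⟨F, hF⟩ ⟨F', hF'⟩ h
      have h' := congrArg Subtype.val h
      apply Subtype.ext
      funext y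
      have := congrFun h' ((y.val : ℕ) : ZMod n)
      simpa [hyval y] using this
    · rintro ⟨f, hp, hfix⟩
      refine ⟨⟨fun y => f ((y.val : ℕ) : ZMod n), ?_⟩, ?_⟩
      · intro y
        have h1 : f (((y.val : ℕ) : ZMod n) + 1) = f ((((y+1).val : ℕ)) : ZMod n) := by
          apply constant_of_fixed m hfix
          rw [map_add, map_one, hyval y, hyval (y+1)]
        have := hp ((y.val : ℕ) : ZMod n)
        rw [h1] at this
        exact this
      · apply Subtype.ext
        funext v
        apply constant_of_fixed m hfix
        rw [hyval (ZMod.castHom hdvd (ZMod d) v)]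

/-! ### The rotation action and Burnside -/

instance properAction (n l : ℕ) :
    AddAction (ZMod n) {f : ZMod n → Fin l // ∀ x, f x ≠ f (x+1)} where
  vadd m f := ⟨fun v => f.1 (v + m), fun x => by
    show f.1 (x + m) ≠ f.1 ((x + 1) + m)
    rw [add_right_comm]
    exact f.2 (x + m)⟩
  zero_vadd f := Subtype.ext (funext fun v => by show f.1 (v + 0) = f.1 v; rw [add_zero])
  add_vadd a b f := Subtype.ext (funext fun v => by
    show f.1 (v + (a + b)) = f.1 (v + a + b)
    rw [add_assoc])

lemma R_card (l : ℕ) {d : ℕ} (hd : 0 < d) (hodd : Odd d) :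
    ((Nat.card {F : ZMod d → Fin l // ∀ y, F y ≠ F (y+1)} : ℚ))
      = ((l:ℚ)-1)^d - ((l:ℚ)-1) := by
  obtain ⟨j, rfl⟩ : ∃ j, d = j + 1 := ⟨d - 1, by omega⟩
  have h2 : (Nat.card {F : ZMod (j+1) → Fin l // ∀ y, F y ≠ F (y+1)} : ℤ)
      = ((l:ℤ)-1)^(j+1) + (-1)^(j+1) * ((l:ℤ)-1) := by
    rw [show Nat.card {F : ZMod (j+1) → Fin l // ∀ y, F y ≠ F (y+1)}
        = Nat.card {f : Fin (j+1) → Fin l // ∀ x, f x ≠ f (x+1)} from rfl]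
    exact cyc_card l j
  have h4 : (Nat.card {F : ZMod (j+1) → Fin l // ∀ y, F y ≠ F (y+1)} : ℚ)
      = ((l:ℚ)-1)^(j+1) + (-1)^(j+1) * ((l:ℚ)-1) := by exact_mod_cast h2
  rw [h4, hodd.neg_one_pow]
  ring

end OrbitalAux8

/-- For odd `n`, the number of orbits of the rotation group on proper
`l`-colorings of the cycle `Γ_n` (colorings `f` and `g` being equivalent iff
`g = f ∘ r_m` for some rotation `r_m : v ↦ v + m`) equals
`(1/n) ∑_{d ∣ n} φ(n/d) (l-1)^d - l + 1`. -/
theorem orbital_stmt8 (n l : ℕ) (h0 : 0 < n) (hodd : Odd n) :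
    (Nat.card (Quot (fun f g : {f : ZMod n → Fin l // ∀ x : ZMod n, f x ≠ f (x + 1)} =>
        ∃ m : ZMod n, ∀ v : ZMod n, g.1 v = f.1 (v + m))) : ℚ) =
      (1 / (n : ℚ)) * ∑ d ∈ n.divisors, (Nat.totient (n / d) : ℚ) * ((l : ℚ) - 1) ^ d
        - (l : ℚ) + 1 := by
  classical
  haveI : NeZero n := ⟨h0.ne'⟩
  set X := {f : ZMod n → Fin l // ∀ x : ZMod n, f x ≠ f (x + 1)} with hX
  -- identify the Quot with the orbit-quotient
  have key : ∀ f g : X, (∃ m : ZMod n, ∀ v : ZMod n, g.1 v = f.1 (v + m))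
      ↔ (AddAction.orbitRel (ZMod n) X) f g := by
    intro f g
    have h1 : (∃ m : ZMod n, ∀ v, g.1 v = f.1 (v + m))
        ↔ g ∈ AddAction.orbit (ZMod n) f := by
      constructor
      · rintro ⟨m, hm⟩
        exact ⟨m, Subtype.ext (funext fun v => (hm v).symm)⟩
      · rintro ⟨m, hm⟩
        exact ⟨m, fun v => congrFun (congrArg Subtype.val hm.symm) v⟩
    rw [h1]
    constructor
    · intro h
      exact (AddAction.orbitRel (ZMod n) X).symm (AddAction.orbitRel_apply.2 h)
    · intro h
      exact AddAction.orbitRel_apply.1 ((AddAction.orbitRel (ZMod n) X).symm h)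
  have e : Quot (fun f g : X => ∃ m : ZMod n, ∀ v : ZMod n, g.1 v = f.1 (v + m))
      ≃ Quotient (AddAction.orbitRel (ZMod n) X) := Quot.congrRight key
  -- Burnside
  have hb := AddAction.sum_card_fixedBy_eq_card_orbits_mul_card_addGroup (ZMod n) X
  have hcardZ : Fintype.card (ZMod n) = n := ZMod.card n
  -- fixed point counts
  have hfix : ∀ m : ZMod n, Fintype.card (AddAction.fixedBy X m)
      = Nat.card {F : ZMod (Nat.gcd (ZMod.val m) n) → Fin l // ∀ y, F y ≠ F (y+1)} := by
    intro m
    rw [← Nat.card_eq_fintype_card, ← OrbitalAux8.fixed_card n l m]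
    apply Nat.card_congr
    refine Equiv.trans (Equiv.subtypeEquivRight ?_)
      (Equiv.subtypeSubtypeEquivSubtypeInter
        (fun f : ZMod n → Fin l => ∀ x, f x ≠ f (x+1)) (fun f => ∀ v, f (v + m) = f v))
    intro x
    show m +ᵥ x = x ↔ _
    rw [Subtype.ext_iff, funext_iff]
    exact Iff.rfl
  -- let N be the number of orbits
  set N := Nat.card (Quot (fun f g : X => ∃ m : ZMod n, ∀ v : ZMod n, g.1 v = f.1 (v + m)))
    with hN
  have hNcard : N = Fintype.card (Quotient (AddAction.orbitRel (ZMod n) X)) := by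
    rw [hN, Nat.card_congr e, Nat.card_eq_fintype_card]
  -- assemble the counting identity in ℕ
  set R : ℕ → ℕ := fun d => Nat.card {F : ZMod d → Fin l // ∀ y, F y ≠ F (y+1)} with hR
  have hsum0 : ∑ m : ZMod n, Fintype.card (AddAction.fixedBy X m)
      = ∑ m : ZMod n, R (Nat.gcd n (ZMod.val m)) := by
    apply Finset.sum_congr rfl
    intro m _
    rw [hfix m, Nat.gcd_comm]
  have hsum1 : ∑ m : ZMod n, R (Nat.gcd n (ZMod.val m))
      = ∑ k ∈ Finset.range n, R (Nat.gcd n k) := by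
    apply Finset.sum_nbij' (i := fun m => ZMod.val m) (j := fun k => (k : ZMod n))
    · intro m _
      exact Finset.mem_range.2 (ZMod.val_lt m)
    · intro k _
      exact Finset.mem_univ _
    · intro m _
      exact ZMod.natCast_rightInverse m
    · intro k hk
      exact ZMod.val_cast_of_lt (Finset.mem_range.1 hk)
    · intro m _
      rfl
  have hmaps : ∀ k ∈ Finset.range n, Nat.gcd n k ∈ n.divisors := fun k _ =>
    Nat.mem_divisors.2 ⟨Nat.gcd_dvd_left _ _, h0.ne'⟩
  have hsum2 : ∑ k ∈ Finset.range n, R (Nat.gcd n k)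
      = ∑ d ∈ n.divisors, Nat.totient (n / d) * R d := by
    rw [← Finset.sum_fiberwise_of_maps_to hmaps]
    apply Finset.sum_congr rfl
    intro d hd
    have hcongr : ∀ k ∈ (Finset.range n).filter (fun k => Nat.gcd n k = d),
        R (Nat.gcd n k) = R d := fun k hk => by rw [(Finset.mem_filter.1 hk).2]
    rw [Finset.sum_congr rfl hcongr, Finset.sum_const, smul_eq_mul,
      ← Nat.totient_div_of_dvd (Nat.dvd_of_mem_divisors hd)]
  have hnat : n * N = ∑ d ∈ n.divisors, Nat.totient (n / d) * R d := by
    rw [← hsum2, ← hsum1, ← hsum0, hb, hNcard, hcardZ, Nat.mul_comm]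
  -- cast to ℚ
  have hq : (n : ℚ) * N = ∑ d ∈ n.divisors, (Nat.totient (n / d) : ℚ) * (R d : ℚ) := by
    exact_mod_cast congrArg (Nat.cast (R := ℚ)) hnat
  have hterm : ∀ d ∈ n.divisors, (Nat.totient (n / d) : ℚ) * (R d : ℚ)
      = (Nat.totient (n / d) : ℚ) * (((l:ℚ)-1)^d - ((l:ℚ)-1)) := by
    intro d hd
    have hdvd := Nat.dvd_of_mem_divisors hd
    have hdpos : 0 < d := Nat.pos_of_mem_divisors hd
    have hdodd : Odd d := by
      rcases Nat.even_or_odd d with he | ho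
      · exfalso
        obtain ⟨k, hk⟩ := hdvd
        exact (Nat.not_even_iff_odd.mpr hodd) (by rw [hk]; exact he.mul_right k)
      · exact ho
    show (Nat.totient (n / d) : ℚ) * (Nat.card {F : ZMod d → Fin l // ∀ y, F y ≠ F (y+1)} : ℚ) = _
    rw [OrbitalAux8.R_card l hdpos hdodd]
  rw [Finset.sum_congr rfl hterm] at hq
  have htot : ∑ d ∈ n.divisors, (Nat.totient (n / d) : ℚ) = (n : ℚ) := by
    rw [← Nat.cast_sum]
    norm_cast
    rw [Nat.sum_div_divisors n Nat.totient]
    exact Nat.sum_totient n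
  have hq2 : (n : ℚ) * N = (∑ d ∈ n.divisors, (Nat.totient (n / d) : ℚ) * ((l:ℚ)-1)^d)
      - (n : ℚ) * ((l:ℚ) - 1) := by
    rw [hq, ← htot, Finset.sum_mul, ← Finset.sum_sub_distrib]
    apply Finset.sum_congr rfl
    intro d _
    ring
  have hn0 : (n : ℚ) ≠ 0 := Nat.cast_ne_zero.2 h0.ne'
  field_simp
  linear_combination hq2
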